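/- Let D = pdiag(d_1,…,d_n) be a pseudo-diagonal matrix with d_1 ≤ … ≤ d_s ≤ 0 ≤ d_{s+1} ≤ … ≤ d_n, where n ≥ 3 and 1 ≤ s < n. Then for every integer k ≥ 2 and all i, j ∈ {1,…,n}: (D^k)_{ij} = (k−2)d_n if max(i,j) ≤ s; (D^k)_{ij} = max(k·d_i, (k−2)d_n) if i = j > s; and (D^k)_{ij} = max((k−1)·d_{max(i,j)}, (k−2)d_n) if i ≠ j and max(i,j) > s. -/

import Mathlib

open Finset

/-- Max-plus matrix product: `(A ⊗ B) i j = max_k (A i k + B k j)`. -/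
noncomputable def mpMul {n : ℕ} [NeZero n] (A B : Fin n → Fin n → ℝ) :
    Fin n → Fin n → ℝ :=
  fun i j => univ.sup' univ_nonempty fun k => A i k + B k j

/-- `mpPow A k` is the `k`-th max-plus power of `A` (for `k ≥ 1`). -/
noncomputable def mpPow {n : ℕ} [NeZero n] (A : Fin n → Fin n → ℝ) (k : ℕ) :
    Fin n → Fin n → ℝ :=
  (mpMul A)^[k - 1] A

/-- Powers of a pseudo-diagonal matrix `D = pdiag(d₁, …, dₙ)` with
`d₁ ≤ … ≤ d_s ≤ 0 ≤ d_{s+1} ≤ … ≤ dₙ`, `n ≥ 3`, `1 ≤ s < n`.  Indices are 0-based, so the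
paper's condition `max(i,j) ≤ s` reads `(max i j : ℕ) < s`, `i = j > s` reads
`i = j` with `s ≤ (i : ℕ)`, and `dₙ` is `d ⟨n-1, _⟩`. -/
theorem mp_exists_third {n : ℕ} (hn : 3 ≤ n) (i j : Fin n) :
    ∃ m : Fin n, m ≠ i ∧ m ≠ j := by
  by_contra h
  push_neg at h
  have hsub : (Finset.univ : Finset (Fin n)) ⊆ {i, j} := by
    intro m _
    simp only [Finset.mem_insert, Finset.mem_singleton]
    by_cases hmi : m = i
    · exact Or.inl hmi
    · exact Or.inr (h m hmi)
  have h1 := Finset.card_le_card hsub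
  have h2 : ({i, j} : Finset (Fin n)).card ≤ 2 := by
    apply le_trans (Finset.card_insert_le _ _); simp
  simp [Finset.card_univ] at h1
  omega

theorem mp_aux {n : ℕ} [NeZero n] (hn : 3 ≤ n)
    (d : Fin n → ℝ) (hmono : Monotone d)
    (hdN : 0 ≤ d ⟨n - 1, by omega⟩)
    (D : Fin n → Fin n → ℝ)
    (hD : ∀ i j, D i j = if i = j then d i else 0) :
    ∀ k : ℕ, ∀ i j, mpPow D (k + 2) i j =
      if i = j then max (((k : ℝ) + 2) * d i) ((k : ℝ) * d ⟨n - 1, by omega⟩)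
      else max (((k : ℝ) + 1) * max (d i) (d j)) ((k : ℝ) * d ⟨n - 1, by omega⟩) := by
  set N : Fin n := ⟨n - 1, by omega⟩ with hNdef
  have hle : ∀ m : Fin n, d m ≤ d N := by
    intro m
    apply hmono
    rw [Fin.le_def]
    have := m.isLt
    simp only [hNdef]
    omega
  have hk0 : ∀ k : ℕ, (0:ℝ) ≤ (k:ℝ) := fun k => Nat.cast_nonneg k
  intro k
  induction k with
  | zero =>
    intro i j
    have h2 : mpPow D 2 i j = univ.sup' univ_nonempty fun m => D i m + D m j := by
      simp [mpPow, mpMul]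
    rw [h2]
    push_cast
    by_cases hij : i = j
    · subst hij
      rw [if_pos rfl]
      apply le_antisymm
      · apply Finset.sup'_le
        intro m _
        rw [hD, hD]
        by_cases hmi : m = i
        · subst hmi
          rw [if_pos rfl]
          refine le_trans ?_ (le_max_left _ _); linarith
        · rw [if_neg (Ne.symm hmi), if_neg hmi]
          refine le_trans ?_ (le_max_right _ _); linarith
      · rw [max_le_iff]
        constructor
        · refine le_trans ?_ (Finset.le_sup' _ (Finset.mem_univ i))
          rw [hD, if_pos rfl]; linarith
        · obtain ⟨m, hmi, -⟩ := mp_exists_third hn i i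
          refine le_trans ?_ (Finset.le_sup' _ (Finset.mem_univ m))
          rw [hD, hD, if_neg (Ne.symm hmi), if_neg hmi]
          linarith
    · rw [if_neg hij]
      apply le_antisymm
      · apply Finset.sup'_le
        intro m _
        rw [hD, hD]
        by_cases hmi : m = i
        · subst hmi
          rw [if_pos rfl, if_neg hij]
          refine le_trans ?_ (le_max_left _ _)
          have := le_max_left (d m) (d j); linarith
        · by_cases hmj : m = j
          · subst hmj
            rw [if_pos rfl, if_neg (Ne.symm hmi)]
            refine le_trans ?_ (le_max_left _ _)
            have := le_max_right (d i) (d m); linarith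
          · rw [if_neg (Ne.symm hmi), if_neg hmj]
            refine le_trans ?_ (le_max_right _ _); linarith
      · rw [max_le_iff]
        constructor
        · rcases le_total (d j) (d i) with hd | hd
          · refine le_trans ?_ (Finset.le_sup' _ (Finset.mem_univ i))
            rw [hD, hD, if_pos rfl, if_neg hij, max_eq_left hd]; linarith
          · refine le_trans ?_ (Finset.le_sup' _ (Finset.mem_univ j))
            rw [hD, hD, if_pos rfl, if_neg hij, max_eq_right hd]; linarith
        · obtain ⟨m, hmi, hmj⟩ := mp_exists_third hn i j
          refine le_trans ?_ (Finset.le_sup' _ (Finset.mem_univ m))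
          rw [hD, hD, if_neg (Ne.symm hmi), if_neg hmj]
          linarith
  | succ k ih =>
    intro i j
    have h2 : mpPow D (k + 1 + 2) i j =
        univ.sup' univ_nonempty fun m => D i m + mpPow D (k + 2) m j := by
      simp only [mpPow, show k + 1 + 2 - 1 = (k + 2 - 1) + 1 from rfl,
        Function.iterate_succ_apply']
      rfl
    rw [h2]
    push_cast
    by_cases hij : i = j
    · subst hij
      rw [if_pos rfl]
      apply le_antisymm
      · apply Finset.sup'_le
        intro m _
        rw [hD, ih]
        by_cases hmi : m = i
        · subst hmi
          rw [if_pos rfl, if_pos rfl, ← max_add_add_left]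
          refine max_le (le_trans ?_ (le_max_left _ _)) (le_trans ?_ (le_max_right _ _))
          · linarith
          · linarith [hle m]
        · rw [if_neg (Ne.symm hmi), if_neg hmi, zero_add]
          refine max_le (le_trans ?_ (le_max_right _ _)) (le_trans ?_ (le_max_right _ _))
          · exact mul_le_mul_of_nonneg_left (max_le (hle m) (hle i)) (by positivity)
          · nlinarith [hdN, hk0 k]
      · rw [max_le_iff]
        constructor
        · refine le_trans ?_ (Finset.le_sup' _ (Finset.mem_univ i))
          rw [hD, ih, if_pos rfl, if_pos rfl]
          refine le_trans ?_ (add_le_add_right (le_max_left _ _) _)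
          linarith
        · by_cases hiN : i = N
          · refine le_trans ?_ (Finset.le_sup' _ (Finset.mem_univ i))
            rw [hD, ih, if_pos rfl, if_pos rfl]
            refine le_trans ?_ (add_le_add_right (le_max_right _ _) _)
            rw [hiN]; linarith
          · refine le_trans ?_ (Finset.le_sup' _ (Finset.mem_univ N))
            rw [hD, ih, if_neg hiN, if_neg (Ne.symm hiN), zero_add,
              max_eq_left (hle i)]
            exact le_max_left _ _
    · rw [if_neg hij]
      apply le_antisymm
      · apply Finset.sup'_le
        intro m _
        rw [hD, ih]
        by_cases hmi : m = i
        · subst hmi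
          rw [if_pos rfl, if_neg hij, ← max_add_add_left]
          refine max_le (le_trans ?_ (le_max_left _ _)) (le_trans ?_ (le_max_right _ _))
          · linarith [le_max_left (d m) (d j)]
          · linarith [hle m]
        · by_cases hmj : m = j
          · subst hmj
            rw [if_neg hij, if_pos rfl, zero_add]
            refine max_le (le_trans ?_ (le_max_left _ _)) (le_trans ?_ (le_max_right _ _))
            · have := mul_le_mul_of_nonneg_left (le_max_right (d i) (d m))
                (show (0:ℝ) ≤ (k:ℝ) + 2 by positivity)
              linarith
            · linarith [hdN]
          · rw [if_neg (Ne.symm hmi), if_neg hmj, zero_add]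
            refine max_le (le_trans ?_ (le_max_right _ _)) (le_trans ?_ (le_max_right _ _))
            · exact mul_le_mul_of_nonneg_left (max_le (hle m) (hle j)) (by positivity)
            · linarith [hdN]
      · rw [max_le_iff]
        constructor
        · rcases le_total (d j) (d i) with hd | hd
          · refine le_trans ?_ (Finset.le_sup' _ (Finset.mem_univ i))
            rw [hD, ih, if_pos rfl, if_neg hij, max_eq_left hd]
            refine le_trans ?_ (add_le_add_right (le_max_left _ _) _)
            linarith
          · refine le_trans ?_ (Finset.le_sup' _ (Finset.mem_univ j))
            rw [hD, ih, if_neg hij, if_pos rfl, zero_add, max_eq_right hd]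
            refine le_trans ?_ (le_max_left _ _); linarith
        · by_cases hiN : i = N
          · refine le_trans ?_ (Finset.le_sup' _ (Finset.mem_univ i))
            rw [hD, ih, if_pos rfl, if_neg hij]
            refine le_trans ?_ (add_le_add_right (le_max_right _ _) _)
            rw [hiN]; linarith
          · by_cases hjN : j = N
            · refine le_trans ?_ (Finset.le_sup' _ (Finset.mem_univ j))
              rw [hD, ih, if_neg hij, if_pos rfl, zero_add]
              refine le_trans ?_ (le_max_left _ _)
              rw [hjN]; linarith [hdN]
            · refine le_trans ?_ (Finset.le_sup' _ (Finset.mem_univ N))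
              rw [hD, ih, if_neg hiN, if_neg (Ne.symm hjN), zero_add,
                max_eq_left (hle j)]
              exact le_max_left _ _

theorem mpPow_pseudoDiagonal_mixed {n : ℕ} [NeZero n] (hn : 3 ≤ n)
    (s : ℕ) (hs1 : 1 ≤ s) (hs2 : s < n)
    (d : Fin n → ℝ) (hmono : Monotone d)
    (hneg : ∀ i : Fin n, (i : ℕ) < s → d i ≤ 0)
    (hpos : ∀ i : Fin n, s ≤ (i : ℕ) → 0 ≤ d i)
    (D : Fin n → Fin n → ℝ)
    (hD : ∀ i j, D i j = if i = j then d i else 0)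
    (k : ℕ) (hk : 2 ≤ k) (i j : Fin n) :
    (((max i j : Fin n) : ℕ) < s →
        mpPow D k i j = ((k : ℝ) - 2) * d ⟨n - 1, by omega⟩) ∧
    (i = j → s ≤ (i : ℕ) →
        mpPow D k i j = max ((k : ℝ) * d i) (((k : ℝ) - 2) * d ⟨n - 1, by omega⟩)) ∧
    (i ≠ j → s ≤ ((max i j : Fin n) : ℕ) →
        mpPow D k i j =
          max (((k : ℝ) - 1) * d (max i j)) (((k : ℝ) - 2) * d ⟨n - 1, by omega⟩)) := by
  obtain ⟨m, rfl⟩ : ∃ m, k = m + 2 := ⟨k - 2, by omega⟩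
  have hdN : 0 ≤ d ⟨n - 1, by omega⟩ := hpos _ (by simp; omega)
  have H := mp_aux hn d hmono hdN D hD m i j
  have hm0 : (0:ℝ) ≤ (m:ℝ) := Nat.cast_nonneg m
  refine ⟨?_, ?_, ?_⟩
  · intro hmax
    have hi : (i : ℕ) < s :=
      lt_of_le_of_lt (Fin.le_def.mp (le_max_left i j)) hmax
    have hj : (j : ℕ) < s :=
      lt_of_le_of_lt (Fin.le_def.mp (le_max_right i j)) hmax
    have h1 : d i ≤ 0 := hneg i hi
    have h2 : d j ≤ 0 := hneg j hj
    rw [H]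
    by_cases hij : i = j
    · rw [if_pos hij, max_eq_right]
      · push_cast; ring
      · have := mul_nonpos_of_nonneg_of_nonpos (show (0:ℝ) ≤ (m:ℝ)+2 by positivity) h1
        nlinarith
    · rw [if_neg hij, max_eq_right]
      · push_cast; ring
      · have hM : max (d i) (d j) ≤ 0 := max_le h1 h2
        have := mul_nonpos_of_nonneg_of_nonpos (show (0:ℝ) ≤ (m:ℝ)+1 by positivity) hM
        nlinarith
  · intro hij _
    rw [H, if_pos hij]
    push_cast
    ring_nf
  · intro hij _
    rw [H, if_neg hij]
    have hdm : d (max i j) = max (d i) (d j) := by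
      rcases le_total i j with h | h
      · rw [max_eq_right h, max_eq_right (hmono h)]
      · rw [max_eq_left h, max_eq_left (hmono h)]
    rw [hdm]
    push_cast
    ring_nf
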